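/- Let λ be the counting measure on ℤ^d ∩ Q_{2L} where Q_{2L} = [0,2L]^d, write Q_{2L} as the union of 2^d cubes Q_i of side L, let ε_i ∈ {−1, +1}, and let Σ = ⋃_i ∂Q_i ∩ Q_{2L} be the union of the internal boundaries. Then the function ξ(x) = dist(x, Σ) ∑_i ε_i χ_{Q_i}(x) is 1-Lipschitz on the union of the open cubes, and for any coefficients κ_i, κ > 0 with ∑_i κ_i λ(Q_i) = κ λ(Q_{2L}), the Kantorovich duality for W_1 yields W_1(∑_i κ_i χ_{Q_i} λ, κ λ) ≥ ∑_i ∑_{X ∈ ℤ^d ∩ Q_i} dist(X, Σ) |κ_i − κ| ≥ c L^{d+1} ∑_i |κ_i − κ| for some dimensional constant c > 0 when L is large. -/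

import Mathlib

open MeasureTheory ENNReal

/-- Transportation cost of order `p`: infimum over couplings. -/
noncomputable def Wcost {X : Type*} [MeasurableSpace X] [PseudoMetricSpace X]
    (p : ℝ) (μ ν : Measure X) : ℝ≥0∞ :=
  sInf { c | ∃ π : Measure (X × X), π.map Prod.fst = μ ∧ π.map Prod.snd = ν ∧
      c = ∫⁻ z, ENNReal.ofReal (dist z.1 z.2 ^ p) ∂π }

/-- The lattice measure `∑_{X ∈ ℤ^d} δ_X` on `ℝ^d`. -/
noncomputable def latticeMeasure (d : ℕ) : Measure (EuclideanSpace ℝ (Fin d)) :=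
  Measure.sum fun k : Fin d → ℤ => Measure.dirac (WithLp.toLp 2 (fun j => (k j : ℝ)) : EuclideanSpace ℝ (Fin d))

/-- The sub-cube of side `L` of `[0,2L]^d` indexed by `s : Fin d → Fin 2`. -/
def subCube (d : ℕ) (L : ℝ) (s : Fin d → Fin 2) : Set (EuclideanSpace ℝ (Fin d)) :=
  {x | ∀ j, (s j : ℝ) * L ≤ x j ∧ x j < ((s j : ℝ) + 1) * L}

/-- The cube `[0,2L]^d`. -/
def bigCube (d : ℕ) (L : ℝ) : Set (EuclideanSpace ℝ (Fin d)) :=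
  {x | ∀ j, 0 ≤ x j ∧ x j ≤ 2 * L}

/-- The union `Σ` of the internal boundaries of the `2^d` sub-cubes of `Q_{2L}`. -/
def internalBoundaries (d : ℕ) (L : ℝ) : Set (EuclideanSpace ℝ (Fin d)) :=
  (⋃ s, frontier (subCube d L s)) ∩ bigCube d L

section Aux
variable {d : ℕ} {L : ℝ}

local notation "E" => EuclideanSpace ℝ (Fin d)

/-- coordinate bound -/
lemma fin2_cast_real (a : Fin 2) : (a : ℝ) = 0 ∨ (a : ℝ) = 1 := by
  have h2 : (a : ℕ) < 2 := a.2
  have : (a : ℕ) = 0 ∨ (a : ℕ) = 1 := by omega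
  rcases this with h | h <;> [left; right] <;> simp [h]

lemma coord_le_dist (x y : E) (j : Fin d) : |x j - y j| ≤ dist x y := by
  rw [EuclideanSpace.dist_eq]
  have h1 : |x j - y j| = Real.sqrt ((x j - y j) ^ 2) := by
    rw [Real.sqrt_sq_eq_abs]
  rw [h1]
  apply Real.sqrt_le_sqrt
  have := Finset.single_le_sum (f := fun i => dist (x i) (y i) ^ 2)
    (fun i _ => sq_nonneg _) (Finset.mem_univ j)
  simpa [Real.dist_eq, sq_abs] using this

lemma continuous_coord (j : Fin d) : Continuous fun x : E => x j := by
  have : LipschitzWith 1 fun x : E => x j := by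
    apply LipschitzWith.of_dist_le_mul
    intro x y
    rw [Real.dist_eq]
    calc |x j - y j| ≤ dist x y := coord_le_dist x y j
    _ ≤ 1 * dist x y := by rw [one_mul]
  exact this.continuous

lemma measurable_coord (j : Fin d) : Measurable fun x : E => x j :=
  (continuous_coord j).measurable

lemma measurableSet_subCube (s : Fin d → Fin 2) : MeasurableSet (subCube d L s) := by
  have : subCube d L s = ⋂ j, {x : E | (s j : ℝ) * L ≤ x j ∧ x j < ((s j : ℝ) + 1) * L} := by
    ext x; simp [subCube, Set.mem_iInter]
  rw [this]
  exact MeasurableSet.iInter fun j =>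
    ((measurableSet_le measurable_const (measurable_coord j)).inter
      (measurableSet_lt (measurable_coord j) measurable_const))

lemma measurableSet_bigCube : MeasurableSet (bigCube d L) := by
  have : bigCube d L = ⋂ j, {x : E | 0 ≤ x j ∧ x j ≤ 2 * L} := by
    ext x; simp [bigCube, Set.mem_iInter]
  rw [this]
  exact MeasurableSet.iInter fun j =>
    ((measurableSet_le measurable_const (measurable_coord j)).inter
      (measurableSet_le (measurable_coord j) measurable_const))

lemma subCube_subset_bigCube (hL : 0 ≤ L) (s : Fin d → Fin 2) :
    subCube d L s ⊆ bigCube d L := by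
  intro x hx j
  obtain ⟨h1, h2⟩ := hx j
  have hs : (s j : ℝ) = 0 ∨ (s j : ℝ) = 1 := fin2_cast_real (s j)
  rcases hs with h | h <;> rw [h] at h1 h2 <;> constructor <;> linarith

lemma subCube_disjoint {s t : Fin d → Fin 2} (hst : s ≠ t) :
    Disjoint (subCube d L s) (subCube d L t) := by
  rw [Set.disjoint_left]
  rintro x hxs hxt
  obtain ⟨j, hj⟩ := Function.ne_iff.1 hst
  obtain ⟨h1, h2⟩ := hxs j
  obtain ⟨h3, h4⟩ := hxt j
  have : (s j : ℕ) < 2 := (s j).2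
  have : (t j : ℕ) < 2 := (t j).2
  have hv : ((s j : ℕ) = 0 ∧ (t j : ℕ) = 1) ∨ ((s j : ℕ) = 1 ∧ (t j : ℕ) = 0) := by
    have : (s j : ℕ) ≠ (t j : ℕ) := fun h => hj (Fin.ext h)
    omega
  rcases hv with ⟨hs0, ht1⟩ | ⟨hs1, ht0⟩
  · rw [hs0] at h2; rw [ht1] at h3; push_cast at h2 h3; linarith
  · rw [hs1] at h1; rw [ht0] at h4; push_cast at h1 h4; linarith

end Aux
section Aux2
variable {d : ℕ} {L : ℝ}
local notation "E" => EuclideanSpace ℝ (Fin d)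

lemma mem_closure_subCube (hL : 0 < L) (t : Fin d → Fin 2) (z : E)
    (hz : ∀ j, (t j : ℝ) * L ≤ z j ∧ z j ≤ ((t j : ℝ) + 1) * L) :
    z ∈ closure (subCube d L t) := by
  rw [Metric.mem_closure_iff]
  intro ε hε
  set c : E := WithLp.toLp 2 (fun j => (t j : ℝ) * L + L / 2 : Fin d → ℝ) with hc
  set θ : ℝ := min 1 (ε / (dist z c + 1)) with hθ
  have hdc : 0 ≤ dist z c := dist_nonneg
  have hθpos : 0 < θ := lt_min one_pos (div_pos hε (by linarith))
  have hθ1 : θ ≤ 1 := min_le_left _ _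
  refine ⟨z + θ • (c - z), ?_, ?_⟩
  · intro j
    have hcj : (c : E) j = (t j : ℝ) * L + L / 2 := rfl
    have happ : (z + θ • (c - z)) j = z j + θ * ((c : E) j - z j) := by
      simp [PiLp.add_apply, PiLp.smul_apply, PiLp.sub_apply, smul_eq_mul]
    rw [happ, hcj]
    obtain ⟨h1, h2⟩ := hz j
    constructor
    · nlinarith
    · nlinarith
  · have : z - (z + θ • (c - z)) = θ • (z - c) := by module
    rw [dist_eq_norm, this, norm_smul]
    simp only [Real.norm_eq_abs, abs_of_pos hθpos]
    rw [← dist_eq_norm]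
    calc θ * dist z c ≤ (ε / (dist z c + 1)) * dist z c := by
          apply mul_le_mul_of_nonneg_right (min_le_right _ _) hdc
      _ < ε := by
          rw [div_mul_eq_mul_div, div_lt_iff₀ (by linarith)]
          nlinarith

lemma mem_boundaries_of_coord (hL : 0 < L) {z : E} (hz : z ∈ bigCube d L) {j0 : Fin d}
    (h : z j0 = L ∨ z j0 = 2 * L) : z ∈ internalBoundaries d L := by
  classical
  set t : Fin d → Fin 2 := fun j =>
    if j = j0 then (if z j0 = L then 0 else 1) else (if z j < L then 0 else 1) with ht
  have htj0 : ((t j0 : ℕ) : ℝ) + 1 = z j0 / L := by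
    rcases h with h | h
    · simp only [ht, if_pos rfl, if_pos h]
      simp [h, div_self hL.ne']
    · by_cases hL2 : z j0 = L
      · rw [hL2] at h; exfalso; linarith
      · simp only [ht, if_pos rfl, if_neg hL2]
        rw [h]
        norm_num
        field_simp
  have hbounds : ∀ j, (t j : ℝ) * L ≤ z j ∧ z j ≤ ((t j : ℝ) + 1) * L := by
    intro j
    obtain ⟨hz0, hz2⟩ := hz j
    by_cases hj : j = j0
    · subst hj
      rw [htj0, div_mul_cancel₀ _ hL.ne']
      refine ⟨?_, le_refl _⟩
      have : ((t j : ℕ) : ℝ) * L ≤ ((t j : ℕ) : ℝ) * L + L := by linarith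
      calc (t j : ℝ) * L = ((t j : ℝ) + 1) * L - L := by ring
        _ ≤ z j - 0 := by
            rw [htj0, div_mul_cancel₀ _ hL.ne']; linarith
        _ = z j := by ring
    · simp only [ht, if_neg hj]
      by_cases hzL : z j < L
      · simp only [if_pos hzL]; norm_num; constructor <;> linarith
      · simp only [if_neg hzL]; push_neg at hzL; norm_num; constructor <;> linarith
  have hnotmem : z ∉ subCube d L t := by
    intro hmem
    have := (hmem j0).2
    rw [htj0, div_mul_cancel₀ _ hL.ne'] at this
    exact lt_irrefl _ this
  refine ⟨Set.mem_iUnion.2 ⟨t, ?_⟩, hz⟩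
  exact ⟨mem_closure_subCube hL t z hbounds, fun hint => hnotmem (interior_subset hint)⟩

lemma exists_coord_of_mem_boundaries {z : E} (hz : z ∈ internalBoundaries d L) :
    ∃ j, z j = 0 ∨ z j = L ∨ z j = 2 * L := by
  obtain ⟨hU, _⟩ := hz
  obtain ⟨t, hf⟩ := Set.mem_iUnion.1 hU
  have hcl : z ∈ closure (subCube d L t) := frontier_subset_closure hf
  have hbounds : ∀ j, (t j : ℝ) * L ≤ z j ∧ z j ≤ ((t j : ℝ) + 1) * L := by
    have hC : IsClosed {x : E | ∀ j, (t j : ℝ) * L ≤ x j ∧ x j ≤ ((t j : ℝ) + 1) * L} := by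
      have : {x : E | ∀ j, (t j : ℝ) * L ≤ x j ∧ x j ≤ ((t j : ℝ) + 1) * L}
          = ⋂ j, (fun x : E => x j) ⁻¹' (Set.Icc ((t j : ℝ) * L) (((t j : ℝ) + 1) * L)) := by
        ext x; simp [Set.mem_iInter, Set.mem_Icc]
      rw [this]
      exact isClosed_iInter fun j => isClosed_Icc.preimage (continuous_coord j)
    have hsub : subCube d L t ⊆ {x : E | ∀ j, (t j : ℝ) * L ≤ x j ∧ x j ≤ ((t j : ℝ) + 1) * L} :=
      fun x hx j => ⟨(hx j).1, le_of_lt (hx j).2⟩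
    exact closure_minimal hsub hC hcl
  have hni : z ∉ interior (subCube d L t) := hf.2
  have hO : IsOpen {x : E | ∀ j, (t j : ℝ) * L < x j ∧ x j < ((t j : ℝ) + 1) * L} := by
    have : {x : E | ∀ j, (t j : ℝ) * L < x j ∧ x j < ((t j : ℝ) + 1) * L}
        = ⋂ j, (fun x : E => x j) ⁻¹' (Set.Ioo ((t j : ℝ) * L) (((t j : ℝ) + 1) * L)) := by
      ext x; simp [Set.mem_iInter, Set.mem_Ioo]
    rw [this]
    exact isOpen_iInter_of_finite fun j => isOpen_Ioo.preimage (continuous_coord j)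
  have hOsub : {x : E | ∀ j, (t j : ℝ) * L < x j ∧ x j < ((t j : ℝ) + 1) * L} ⊆ subCube d L t :=
    fun x hx j => ⟨le_of_lt (hx j).1, (hx j).2⟩
  have hzO : z ∉ {x : E | ∀ j, (t j : ℝ) * L < x j ∧ x j < ((t j : ℝ) + 1) * L} :=
    fun hmem => hni (interior_maximal hOsub hO hmem)
  simp only [Set.mem_setOf_eq, not_forall] at hzO
  obtain ⟨j, hj⟩ := hzO
  refine ⟨j, ?_⟩
  obtain ⟨hb1, hb2⟩ := hbounds j
  have hval : z j = (t j : ℝ) * L ∨ z j = ((t j : ℝ) + 1) * L := by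
    rcases not_and_or.1 hj with h | h <;> push_neg at h
    · left; linarith
    · right; linarith
  rcases fin2_cast_real (t j) with h0 | h1
  · rw [h0] at hval
    rcases hval with h | h
    · left; rw [h]; ring
    · right; left; rw [h]; ring
  · rw [h1] at hval
    rcases hval with h | h
    · right; left; rw [h]; ring
    · right; right; rw [h]; ring
end Aux2
section Aux3
variable {d : ℕ} {L : ℝ}
local notation "E" => EuclideanSpace ℝ (Fin d)
local notation "Σd" => internalBoundaries d L

lemma eSum_eq {ε : (Fin d → Fin 2) → ℝ} {x : E} {s : Fin d → Fin 2} (hx : x ∈ subCube d L s) :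
    ∑ t : Fin d → Fin 2, ε t * Set.indicator (subCube d L t) (fun _ => (1 : ℝ)) x = ε s := by
  rw [Finset.sum_eq_single s]
  · rw [Set.indicator_of_mem hx, mul_one]
  · intro t _ hts
    rw [Set.indicator_of_notMem, mul_zero]
    exact fun hxt => (Set.disjoint_left.1 (subCube_disjoint hts)) hxt hx
  · intro h; exact absurd (Finset.mem_univ s) h

lemma eSum_zero {ε : (Fin d → Fin 2) → ℝ} {x : E} (hx : ∀ s, x ∉ subCube d L s) :
    ∑ t : Fin d → Fin 2, ε t * Set.indicator (subCube d L t) (fun _ => (1 : ℝ)) x = 0 := by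
  apply Finset.sum_eq_zero
  intro t _
  rw [Set.indicator_of_notMem (hx t), mul_zero]

lemma mem_boundaries_of_not_union (hL : 0 < L) {x : E} (hx : x ∈ bigCube d L)
    (hx2 : ∀ s, x ∉ subCube d L s) : x ∈ Σd := by
  classical
  have : ∃ j, x j = 2 * L := by
    by_contra hcon
    push_neg at hcon
    apply hx2 (fun j => if x j < L then 0 else 1)
    intro j
    obtain ⟨h0, h2⟩ := hx j
    have h2' : x j < 2 * L := lt_of_le_of_ne h2 (hcon j)
    by_cases hj : x j < L
    · simp only [if_pos hj]; norm_num; constructor <;> linarith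
    · simp only [if_neg hj]; push_neg at hj; norm_num; constructor <;> linarith
  obtain ⟨j, hj⟩ := this
  exact mem_boundaries_of_coord hL hx (Or.inr hj)

lemma abs_infDist_sub_le (x y : E) : |Metric.infDist x Σd - Metric.infDist y Σd| ≤ dist x y := by
  rw [abs_sub_le_iff]
  constructor
  · have := Metric.infDist_le_infDist_add_dist (x := x) (y := y) (s := Σd); linarith
  · have := Metric.infDist_le_infDist_add_dist (x := y) (y := x) (s := Σd)
    rw [dist_comm] at this; linarith

lemma sep_core (hL : 0 < L) (x y : E) (hx : x ∈ bigCube d L) (hy : y ∈ bigCube d L)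
    (j : Fin d) (hxj : x j < L) (hyj : L ≤ y j) :
    Metric.infDist x Σd + Metric.infDist y Σd ≤ dist x y := by
  set θ : ℝ := (L - x j) / (y j - x j) with hθdef
  have hden : 0 < y j - x j := by linarith
  have hθ0 : 0 ≤ θ := div_nonneg (by linarith) (le_of_lt hden)
  have hθ1 : θ ≤ 1 := by
    rw [div_le_one hden]; linarith
  set z : E := x + θ • (y - x) with hz
  have happ : ∀ i, z i = x i + θ * (y i - x i) := by
    intro i; simp [hz, PiLp.add_apply, PiLp.smul_apply, PiLp.sub_apply, smul_eq_mul]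
  have hzj : z j = L := by
    rw [happ j, hθdef, div_mul_cancel₀ _ hden.ne']; ring
  have hzbig : z ∈ bigCube d L := by
    intro i
    obtain ⟨ha, hb⟩ := hx i
    obtain ⟨hc, hd⟩ := hy i
    rw [happ i]
    constructor <;> nlinarith
  have hzS : z ∈ Σd := mem_boundaries_of_coord hL hzbig (Or.inl hzj)
  have hdx : dist x z = θ * dist x y := by
    have : x - z = θ • (x - y) := by rw [hz]; module
    rw [dist_eq_norm, this, norm_smul, Real.norm_eq_abs, abs_of_nonneg hθ0, ← dist_eq_norm]
  have hdy : dist y z = (1 - θ) * dist x y := by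
    have : y - z = (1 - θ) • (y - x) := by rw [hz]; module
    rw [dist_eq_norm, this, norm_smul, Real.norm_eq_abs, abs_of_nonneg (by linarith),
      ← dist_eq_norm, dist_comm]
  have h1 : Metric.infDist x Σd ≤ θ * dist x y := hdx ▸ Metric.infDist_le_dist_of_mem hzS
  have h2 : Metric.infDist y Σd ≤ (1 - θ) * dist x y := hdy ▸ Metric.infDist_le_dist_of_mem hzS
  nlinarith

lemma sep (hL : 0 < L) {x y : E} {s t : Fin d → Fin 2} (hst : s ≠ t)
    (hxs : x ∈ subCube d L s) (hyt : y ∈ subCube d L t) :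
    Metric.infDist x Σd + Metric.infDist y Σd ≤ dist x y := by
  obtain ⟨j, hj⟩ := Function.ne_iff.1 hst
  have hxbig := subCube_subset_bigCube hL.le s hxs
  have hybig := subCube_subset_bigCube hL.le t hyt
  have hv : ((s j : ℕ) = 0 ∧ (t j : ℕ) = 1) ∨ ((s j : ℕ) = 1 ∧ (t j : ℕ) = 0) := by
    have h1 : (s j : ℕ) < 2 := (s j).2
    have h2 : (t j : ℕ) < 2 := (t j).2
    have : (s j : ℕ) ≠ (t j : ℕ) := fun h => hj (Fin.ext h)
    omega
  obtain ⟨h1x, h2x⟩ := hxs j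
  obtain ⟨h1y, h2y⟩ := hyt j
  rcases hv with ⟨hs0, ht1⟩ | ⟨hs1, ht0⟩
  · apply sep_core hL x y hxbig hybig j
    · rw [hs0] at h2x; push_cast at h2x; linarith
    · rw [ht1] at h1y; push_cast at h1y; linarith
  · rw [dist_comm, add_comm]
    apply sep_core hL y x hybig hxbig j
    · rw [ht0] at h2y; push_cast at h2y; linarith
    · rw [hs1] at h1x; push_cast at h1x; linarith

lemma key_bound (hL : 0 < L) {ε : (Fin d → Fin 2) → ℝ} (hε : ∀ s, ε s = 1 ∨ ε s = -1)
    {x y : E} (hx : x ∈ bigCube d L) (hy : y ∈ bigCube d L) :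
    |(Metric.infDist x Σd * ∑ s : Fin d → Fin 2,
        ε s * Set.indicator (subCube d L s) (fun _ => (1 : ℝ)) x) -
      (Metric.infDist y Σd * ∑ s : Fin d → Fin 2,
        ε s * Set.indicator (subCube d L s) (fun _ => (1 : ℝ)) y)| ≤ dist x y := by
  classical
  have habs : ∀ s, |ε s| = 1 := by
    intro s; rcases hε s with h | h <;> rw [h] <;> norm_num
  by_cases hxc : ∃ s, x ∈ subCube d L s
  · obtain ⟨s, hxs⟩ := hxc
    rw [eSum_eq hxs]
    by_cases hyc : ∃ t, y ∈ subCube d L t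
    · obtain ⟨t, hyt⟩ := hyc
      rw [eSum_eq hyt]
      by_cases hst : s = t
      · subst hst
        rw [← sub_mul, abs_mul, habs s, mul_one]
        exact abs_infDist_sub_le x y
      · calc |Metric.infDist x Σd * ε s - Metric.infDist y Σd * ε t|
            ≤ |Metric.infDist x Σd * ε s| + |Metric.infDist y Σd * ε t| := abs_sub _ _
          _ = Metric.infDist x Σd + Metric.infDist y Σd := by
              rw [abs_mul, abs_mul, habs s, habs t, mul_one, mul_one,
                abs_of_nonneg Metric.infDist_nonneg, abs_of_nonneg Metric.infDist_nonneg]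
          _ ≤ dist x y := sep hL hst hxs hyt
    · push_neg at hyc
      have hyS := mem_boundaries_of_not_union hL hy hyc
      rw [eSum_zero hyc, mul_zero, sub_zero, abs_mul, habs s, mul_one,
        abs_of_nonneg Metric.infDist_nonneg]
      calc Metric.infDist x Σd ≤ Metric.infDist y Σd + dist x y :=
            Metric.infDist_le_infDist_add_dist
        _ = dist x y := by rw [Metric.infDist_zero_of_mem hyS, zero_add]
  · push_neg at hxc
    have hxS := mem_boundaries_of_not_union hL hx hxc
    rw [eSum_zero hxc, mul_zero, zero_sub, abs_neg]
    by_cases hyc : ∃ t, y ∈ subCube d L t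
    · obtain ⟨t, hyt⟩ := hyc
      rw [eSum_eq hyt, abs_mul, habs t, mul_one, abs_of_nonneg Metric.infDist_nonneg]
      calc Metric.infDist y Σd ≤ Metric.infDist x Σd + dist y x :=
            Metric.infDist_le_infDist_add_dist
        _ = dist x y := by rw [Metric.infDist_zero_of_mem hxS, zero_add, dist_comm]
    · push_neg at hyc
      rw [eSum_zero hyc, mul_zero, abs_zero]
      exact dist_nonneg
end Aux3
section Aux4
variable {d : ℕ} {L : ℝ}
local notation "E" => EuclideanSpace ℝ (Fin d)

/-- embedding of lattice points -/
def emb (d : ℕ) (k : Fin d → ℤ) : EuclideanSpace ℝ (Fin d) := WithLp.toLp 2 (fun j => (k j : ℝ))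

lemma emb_apply (k : Fin d → ℤ) (j : Fin d) : emb d k j = (k j : ℝ) := rfl

lemma finite_lattice {S : Set (EuclideanSpace ℝ (Fin d))} (hS : S ⊆ bigCube d L) :
    {k : Fin d → ℤ | emb d k ∈ S}.Finite := by
  apply Set.Finite.subset (Set.finite_Icc (fun _ : Fin d => (0 : ℤ)) (fun _ => ⌈2 * L⌉))
  intro k hk
  have hkb := hS hk
  constructor
  · intro j
    have := (hkb j).1
    rw [emb_apply] at this
    show (0 : ℤ) ≤ k j
    exact (Int.cast_le (R := ℝ)).mp (by simpa using this)
  · intro j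
    have := (hkb j).2
    rw [emb_apply] at this
    show k j ≤ ⌈2 * L⌉
    exact (Int.cast_le (R := ℝ)).mp (this.trans (Int.le_ceil _))

lemma integrable_dirac'' (f : E → ℝ) (a : E) : Integrable f (Measure.dirac a) := by
  have h : f =ᵐ[Measure.dirac a] fun _ => f a := by
    rw [ae_dirac_eq]
    exact Filter.eventually_pure.2 rfl
  exact (integrable_const (f a)).congr h.symm

lemma restrict_eq {S : Set E} (hS : MeasurableSet S)
    (h : {k : Fin d → ℤ | emb d k ∈ S}.Finite) :
    (latticeMeasure d).restrict S = ∑ k ∈ h.toFinset, Measure.dirac (emb d k) := by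
  classical
  have hlat : latticeMeasure d = Measure.sum fun k => Measure.dirac (emb d k) := rfl
  rw [hlat, Measure.restrict_sum_of_countable]
  ext A hA
  rw [Measure.sum_apply _ hA, Measure.finset_sum_apply]
  rw [tsum_eq_sum (s := h.toFinset) ?_]
  · apply Finset.sum_congr rfl
    intro k hk
    rw [Set.Finite.mem_toFinset, Set.mem_setOf_eq] at hk
    rw [restrict_dirac' hS, if_pos hk]
  · intro k hk
    rw [Set.Finite.mem_toFinset, Set.mem_setOf_eq] at hk
    rw [restrict_dirac' hS, if_neg hk]
    simp

lemma integral_lattice_restrict {S : Set E} (hS : MeasurableSet S)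
    (h : {k : Fin d → ℤ | emb d k ∈ S}.Finite) (f : E → ℝ) :
    ∫ x in S, f x ∂(latticeMeasure d) = ∑ k ∈ h.toFinset, f (emb d k) := by
  rw [restrict_eq hS h, integral_finset_sum_measure fun k _ => integrable_dirac'' f _]
  exact Finset.sum_congr rfl fun k _ => integral_dirac f (emb d k)

lemma isFiniteMeasure_lattice_restrict {S : Set E} (hS : MeasurableSet S)
    (h : {k : Fin d → ℤ | emb d k ∈ S}.Finite) :
    IsFiniteMeasure ((latticeMeasure d).restrict S) := by
  rw [restrict_eq hS h]
  infer_instance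

lemma integrable_lattice_restrict {S : Set E} (hS : MeasurableSet S)
    (h : {k : Fin d → ℤ | emb d k ∈ S}.Finite) (f : E → ℝ) :
    Integrable f ((latticeMeasure d).restrict S) := by
  rw [restrict_eq hS h]
  exact integrable_finset_sum_measure.2 fun k _ => integrable_dirac'' f _
end Aux4
section Aux5
variable {d : ℕ} {L : ℝ}
local notation "E" => EuclideanSpace ℝ (Fin d)

lemma boundaries_nonempty (hd : 1 ≤ d) (hL : 0 < L) : (internalBoundaries d L).Nonempty := by
  refine ⟨WithLp.toLp 2 (fun _ => L : Fin d → ℝ), mem_boundaries_of_coord hL ?_ (j0 := ⟨0, hd⟩) (Or.inl rfl)⟩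
  intro j
  constructor <;> [linarith; linarith]

lemma infDist_central (hd : 1 ≤ d) (hL : 4 ≤ L) (s : Fin d → Fin 2) (k : Fin d → ℤ)
    (hk : ∀ j, (s j : ℝ) * L + L / 4 ≤ (k j : ℝ) ∧ (k j : ℝ) ≤ (s j : ℝ) * L + 3 * L / 4) :
    L / 4 ≤ Metric.infDist (emb d k) (internalBoundaries d L) := by
  have hL0 : (0 : ℝ) < L := by linarith
  by_contra hcon
  push_neg at hcon
  obtain ⟨y, hyS, hdy⟩ := (Metric.infDist_lt_iff (boundaries_nonempty hd hL0)).1 hcon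
  obtain ⟨j, hv⟩ := exists_coord_of_mem_boundaries hyS
  have hcoord : |emb d k j - y j| ≤ dist (emb d k) y := coord_le_dist _ _ _
  rw [emb_apply] at hcoord
  obtain ⟨hc1, hc2⟩ := hk j
  have habs : L / 4 ≤ |(k j : ℝ) - y j| := by
    rcases fin2_cast_real (s j) with hs | hs <;> rw [hs] at hc1 hc2 <;>
      rcases hv with h | h | h <;> rw [h] <;> rw [le_abs] <;>
      first | (left; linarith) | (right; linarith)
  linarith

lemma count_lower (hd : 1 ≤ d) (hL : 4 ≤ L) (s : Fin d → Fin 2)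
    (h : {k : Fin d → ℤ | emb d k ∈ subCube d L s}.Finite) :
    (1 / 4 : ℝ) ^ (d + 1) * L ^ (d + 1) ≤
      ∑ k ∈ h.toFinset, Metric.infDist (emb d k) (internalBoundaries d L) := by
  classical
  have hL0 : (0 : ℝ) < L := by linarith
  set a : Fin d → ℤ := fun j => ⌈(s j : ℝ) * L + L / 4⌉ with ha
  set M : ℤ := ⌊L / 4⌋ with hM
  have hM1 : (1 : ℤ) ≤ M := by
    rw [hM, Int.le_floor]
    push_cast
    linarith
  set b : Fin d → ℤ := fun j => a j + M with hb
  set G : Finset (Fin d → ℤ) := Finset.Icc a b with hG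
  have hcentral : ∀ k ∈ G, ∀ j,
      (s j : ℝ) * L + L / 4 ≤ (k j : ℝ) ∧ (k j : ℝ) ≤ (s j : ℝ) * L + 3 * L / 4 := by
    intro k hk j
    rw [hG, Finset.mem_Icc] at hk
    obtain ⟨hka, hkb⟩ := hk
    have h1 : (a j : ℝ) ≤ k j := by exact_mod_cast hka j
    have h2 : (k j : ℝ) ≤ (b j : ℝ) := by exact_mod_cast hkb j
    have h3 : (s j : ℝ) * L + L / 4 ≤ (a j : ℝ) := Int.le_ceil _
    have h4 : (a j : ℝ) < (s j : ℝ) * L + L / 4 + 1 := Int.ceil_lt_add_one _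
    have h5 : (M : ℝ) ≤ L / 4 := Int.floor_le _
    have h6 : (b j : ℝ) = (a j : ℝ) + (M : ℝ) := by rw [hb]; push_cast; ring
    constructor
    · linarith
    · rw [h6] at h2; linarith
  have hGsub : G ⊆ h.toFinset := by
    intro k hk
    rw [Set.Finite.mem_toFinset, Set.mem_setOf_eq]
    intro j
    obtain ⟨h1, h2⟩ := hcentral k hk j
    rw [emb_apply]
    constructor
    · linarith
    · have := fin2_cast_real (s j)
      rcases this with hs | hs <;> rw [hs] at h1 h2 ⊢ <;> linarith
  have hbound : ∀ k ∈ G, L / 4 ≤ Metric.infDist (emb d k) (internalBoundaries d L) :=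
    fun k hk => infDist_central hd hL s k (hcentral k hk)
  have hcard : ((M + 1 : ℤ).toNat : ℝ) ^ d ≤ (G.card : ℝ) := by
    rw [hG, Pi.card_Icc]
    have : ∀ j : Fin d, (Finset.Icc (a j) (b j)).card = (M + 1).toNat := by
      intro j
      rw [Int.card_Icc, hb]
      congr 1
      ring
    rw [Finset.prod_congr rfl (fun j _ => this j), Finset.prod_const]
    simp
  have hMcast : (L / 4 : ℝ) ≤ ((M + 1 : ℤ).toNat : ℝ) := by
    have h7 : ((M + 1).toNat : ℤ) = M + 1 := Int.toNat_of_nonneg (by linarith)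
    have h8 : ((M + 1).toNat : ℝ) = (M : ℝ) + 1 := by exact_mod_cast congrArg (Int.cast : ℤ → ℝ) h7
    rw [h8]
    have := Int.lt_floor_add_one (L / 4)
    rw [← hM] at this
    linarith
  calc (1 / 4 : ℝ) ^ (d + 1) * L ^ (d + 1)
      = (L / 4) ^ (d + 1) := by rw [← mul_pow]; congr 1; ring
    _ = (L / 4) ^ d * (L / 4) := by ring
    _ ≤ ((M + 1 : ℤ).toNat : ℝ) ^ d * (L / 4) := by
        apply mul_le_mul_of_nonneg_right (pow_le_pow_left₀ (by positivity) hMcast d) (by positivity)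
    _ ≤ (G.card : ℝ) * (L / 4) := mul_le_mul_of_nonneg_right hcard (by linarith)
    _ = ∑ _k ∈ G, (L / 4 : ℝ) := by rw [Finset.sum_const, nsmul_eq_mul]
    _ ≤ ∑ k ∈ G, Metric.infDist (emb d k) (internalBoundaries d L) :=
        Finset.sum_le_sum hbound
    _ ≤ ∑ k ∈ h.toFinset, Metric.infDist (emb d k) (internalBoundaries d L) :=
        Finset.sum_le_sum_of_subset_of_nonneg hGsub
          (fun k _ _ => Metric.infDist_nonneg)
end Aux5

/-- Step 1 of Proposition 5.3: the test function `ξ(x) = dist(x,Σ) ∑ εᵢ χ_{Qᵢ}(x)`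
with `εᵢ = ±1` is 1-Lipschitz on the union of the open cubes, and by
Kantorovich–Rubinstein duality,
`W₁(∑ κᵢ χ_{Qᵢ} λ, κ λ) ≥ ∑ᵢ (∑_{X ∈ ℤ^d ∩ Qᵢ} dist(X,Σ)) |κᵢ - κ|
  ≥ c L^{d+1} ∑ᵢ |κᵢ - κ|` for `L` large. -/
theorem grid_duality_lower_bound (d : ℕ) (hd : 1 ≤ d) :
    ∃ c : ℝ, 0 < c ∧ ∃ L0 : ℝ, ∀ L : ℝ, L0 ≤ L →
      ((∀ ε : (Fin d → Fin 2) → ℝ, (∀ s, ε s = 1 ∨ ε s = -1) →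
        LipschitzOnWith 1
          (fun x => Metric.infDist x (internalBoundaries d L) *
            ∑ s : Fin d → Fin 2, ε s * Set.indicator (subCube d L s) (fun _ => (1 : ℝ)) x)
          (⋃ s, interior (subCube d L s)))
      ∧ ∀ (κi : (Fin d → Fin 2) → ℝ) (κ : ℝ), (∀ s, 0 < κi s) → 0 < κ →
        (∑ s : Fin d → Fin 2, κi s * (latticeMeasure d (subCube d L s)).toReal
          = κ * (latticeMeasure d (bigCube d L)).toReal) →
        Wcost 1
            (∑ s : Fin d → Fin 2,
              ENNReal.ofReal (κi s) • (latticeMeasure d).restrict (subCube d L s))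
            (ENNReal.ofReal κ • (latticeMeasure d).restrict (bigCube d L))
          ≥ ENNReal.ofReal (∑ s : Fin d → Fin 2,
              (∫ x in subCube d L s, Metric.infDist x (internalBoundaries d L)
                ∂(latticeMeasure d)) * |κi s - κ|)
        ∧ (∑ s : Fin d → Fin 2,
              (∫ x in subCube d L s, Metric.infDist x (internalBoundaries d L)
                ∂(latticeMeasure d)) * |κi s - κ|)
            ≥ c * L ^ (d + 1) * ∑ s : Fin d → Fin 2, |κi s - κ|) := by
  classical
  refine ⟨(1 / 4 : ℝ) ^ (d + 1), by positivity, 4, fun L hL => ?_⟩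
  have hL0 : (0 : ℝ) < L := by linarith
  set Sg := internalBoundaries d L with hSgdef
  constructor
  · -- Lipschitz part
    intro ε hε
    rw [lipschitzOnWith_iff_dist_le_mul]
    intro x hx y hy
    obtain ⟨_, ⟨s, rfl⟩, hxs⟩ := hx
    obtain ⟨_, ⟨t, rfl⟩, hyt⟩ := hy
    have hxb : x ∈ bigCube d L := subCube_subset_bigCube hL0.le s (interior_subset hxs)
    have hyb : y ∈ bigCube d L := subCube_subset_bigCube hL0.le t (interior_subset hyt)
    rw [Real.dist_eq]
    push_cast
    rw [one_mul]
    exact key_bound hL0 hε hxb hyb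
  · -- duality part
    intro κi κ hκi hκ _hmass
    set ε : (Fin d → Fin 2) → ℝ := fun s => if κ ≤ κi s then 1 else -1 with hεdef
    have hε : ∀ s, ε s = 1 ∨ ε s = -1 := by
      intro s; rw [hεdef]; by_cases h : κ ≤ κi s <;> simp [h]
    set ξ : EuclideanSpace ℝ (Fin d) → ℝ := fun x => Metric.infDist x Sg *
      ∑ s : Fin d → Fin 2, ε s * Set.indicator (subCube d L s) (fun _ => (1 : ℝ)) x with hξdef
    have hQfin : ∀ s, {k : Fin d → ℤ | emb d k ∈ subCube d L s}.Finite :=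
      fun s => finite_lattice (subCube_subset_bigCube hL0.le s)
    have hBfin : {k : Fin d → ℤ | emb d k ∈ bigCube d L}.Finite :=
      finite_lattice (le_refl _)
    set I : (Fin d → Fin 2) → ℝ := fun s => ∑ k ∈ (hQfin s).toFinset,
      Metric.infDist (emb d k) Sg with hIdef
    have hInonneg : ∀ s, 0 ≤ I s :=
      fun s => Finset.sum_nonneg fun k _ => Metric.infDist_nonneg
    have hint_eq : ∀ s, (∫ x in subCube d L s, Metric.infDist x Sg ∂(latticeMeasure d)) = I s :=
      fun s => integral_lattice_restrict (measurableSet_subCube s) (hQfin s) _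
    -- the ξ-sums over cubes
    have hsum_cube : ∀ s, (∑ k ∈ (hQfin s).toFinset, ξ (emb d k)) = ε s * I s := by
      intro s
      rw [hIdef, Finset.mul_sum]
      apply Finset.sum_congr rfl
      intro k hk
      rw [Set.Finite.mem_toFinset, Set.mem_setOf_eq] at hk
      rw [hξdef]
      simp only
      rw [eSum_eq hk, mul_comm]
    have hsum_big : (∑ k ∈ hBfin.toFinset, ξ (emb d k)) = ∑ s : Fin d → Fin 2, ε s * I s := by
      have hsplit : ∀ k ∈ hBfin.toFinset, ξ (emb d k) = ∑ s : Fin d → Fin 2,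
          ε s * ((subCube d L s).indicator (fun _ => (1:ℝ)) (emb d k) *
            Metric.infDist (emb d k) Sg) := by
        intro k _
        rw [hξdef]
        simp only
        rw [Finset.mul_sum]
        apply Finset.sum_congr rfl
        intro s _
        ring
      rw [Finset.sum_congr rfl hsplit, Finset.sum_comm]
      apply Finset.sum_congr rfl
      intro s _
      rw [← Finset.mul_sum, hIdef]
      congr 1
      have : ∀ k, (subCube d L s).indicator (fun _ => (1:ℝ)) (emb d k) *
          Metric.infDist (emb d k) Sg
          = if emb d k ∈ subCube d L s then Metric.infDist (emb d k) Sg else 0 := by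
        intro k
        by_cases h : emb d k ∈ subCube d L s
        · rw [Set.indicator_of_mem h, if_pos h, one_mul]
        · rw [Set.indicator_of_notMem h, if_neg h, zero_mul]
      rw [Finset.sum_congr rfl fun k _ => this k, ← Finset.sum_filter]
      apply Finset.sum_congr _ fun k _ => rfl
      ext k
      rw [Finset.mem_filter, Set.Finite.mem_toFinset, Set.Finite.mem_toFinset,
        Set.mem_setOf_eq, Set.mem_setOf_eq]
      constructor
      · rintro ⟨_, h⟩; exact h
      · intro h; exact ⟨subCube_subset_bigCube hL0.le s h, h⟩
    constructor
    · -- Wasserstein lower bound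
      refine le_sInf ?_
      rintro C ⟨π, hπ1, hπ2, rfl⟩
      set μ : Measure (EuclideanSpace ℝ (Fin d)) := ∑ s : Fin d → Fin 2,
        ENNReal.ofReal (κi s) • (latticeMeasure d).restrict (subCube d L s) with hμdef
      set ν : Measure (EuclideanSpace ℝ (Fin d)) :=
        ENNReal.ofReal κ • (latticeMeasure d).restrict (bigCube d L) with hνdef
      -- finiteness
      have hQfinm : ∀ s, IsFiniteMeasure ((latticeMeasure d).restrict (subCube d L s)) :=
        fun s => isFiniteMeasure_lattice_restrict (measurableSet_subCube s) (hQfin s)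
      have hBfinm : IsFiniteMeasure ((latticeMeasure d).restrict (bigCube d L)) :=
        isFiniteMeasure_lattice_restrict measurableSet_bigCube hBfin
      have hμuniv : μ Set.univ < ⊤ := by
        rw [hμdef, Measure.finset_sum_apply]
        refine ENNReal.sum_lt_top.2 fun s _ => ?_
        rw [Measure.smul_apply, smul_eq_mul]
        exact ENNReal.mul_lt_top ENNReal.ofReal_lt_top (hQfinm s).measure_univ_lt_top
      have hπuniv : π Set.univ < ⊤ := by
        have : π.map Prod.fst Set.univ = π Set.univ := by
          rw [Measure.map_apply measurable_fst MeasurableSet.univ, Set.preimage_univ]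
        rw [← this, hπ1]
        exact hμuniv
      have hπfin : IsFiniteMeasure π := ⟨hπuniv⟩
      -- measurability of ξ
      have hmeasξ : Measurable ξ := by
        apply Measurable.mul
        · exact (Metric.continuous_infDist_pt Sg).measurable
        · apply Finset.measurable_sum
          intro s _
          exact (measurable_const.indicator (measurableSet_subCube s)).const_mul _
      -- global bound on distances within bigCube
      set B : ℝ := Real.sqrt (d * (2 * L) ^ 2) with hBdef
      have hB0 : 0 ≤ B := Real.sqrt_nonneg _
      have hdistB : ∀ x ∈ bigCube d L, ∀ y ∈ bigCube d L, dist x y ≤ B := by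
        intro x hx y hy
        rw [EuclideanSpace.dist_eq, hBdef]
        apply Real.sqrt_le_sqrt
        calc (∑ j, dist (x j) (y j) ^ 2) ≤ ∑ _j : Fin d, (2 * L) ^ 2 := by
              apply Finset.sum_le_sum
              intro j _
              have h1 := (hx j).1; have h2 := (hx j).2
              have h3 := (hy j).1; have h4 := (hy j).2
              have : |x j - y j| ≤ 2 * L := by rw [abs_le]; constructor <;> linarith
              calc dist (x j) (y j) ^ 2 = |x j - y j| ^ 2 := by rw [Real.dist_eq]
                _ ≤ (2 * L) ^ 2 := by nlinarith [abs_nonneg (x j - y j)]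
          _ = d * (2 * L) ^ 2 := by rw [Finset.sum_const, Finset.card_univ, Fintype.card_fin,
                nsmul_eq_mul]
      -- integrability of ξ with respect to μ and ν
      have hIμ : Integrable ξ μ := by
        rw [hμdef]
        exact integrable_finset_sum_measure.2 fun s _ =>
          (integrable_lattice_restrict (measurableSet_subCube s) (hQfin s) ξ).smul_measure
            ENNReal.ofReal_ne_top
      have hIν : Integrable ξ ν := by
        rw [hνdef]
        exact (integrable_lattice_restrict measurableSet_bigCube hBfin ξ).smul_measure
          ENNReal.ofReal_ne_top
      have hIfst : Integrable (fun z : EuclideanSpace ℝ (Fin d) × EuclideanSpace ℝ (Fin d) =>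
          ξ z.1) π := by
        have h1 : Integrable ξ (π.map Prod.fst) := hπ1.symm ▸ hIμ
        exact (integrable_map_measure hmeasξ.aestronglyMeasurable
          measurable_fst.aemeasurable).1 h1
      have hIsnd : Integrable (fun z : EuclideanSpace ℝ (Fin d) × EuclideanSpace ℝ (Fin d) =>
          ξ z.2) π := by
        have h1 : Integrable ξ (π.map Prod.snd) := hπ2.symm ▸ hIν
        exact (integrable_map_measure hmeasξ.aestronglyMeasurable
          measurable_snd.aemeasurable).1 h1
      -- a.e. membership
      have hUmeas : MeasurableSet (⋃ s, subCube d L s) :=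
        MeasurableSet.iUnion fun s => measurableSet_subCube s
      have hae1 : ∀ᵐ z ∂π, z.1 ∈ ⋃ s, subCube d L s := by
        rw [ae_iff]
        have hset : {z : EuclideanSpace ℝ (Fin d) × EuclideanSpace ℝ (Fin d) |
            ¬ z.1 ∈ ⋃ s, subCube d L s} = Prod.fst ⁻¹' (⋃ s, subCube d L s)ᶜ := rfl
        rw [hset, ← Measure.map_apply measurable_fst hUmeas.compl, hπ1, hμdef,
          Measure.finset_sum_apply]
        apply Finset.sum_eq_zero
        intro s _
        rw [Measure.smul_apply, Measure.restrict_apply hUmeas.compl]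
        have : (⋃ t, subCube d L t)ᶜ ∩ subCube d L s = ∅ := by
          rw [Set.eq_empty_iff_forall_notMem]
          rintro x ⟨hc, hs⟩
          exact hc (Set.mem_iUnion.2 ⟨s, hs⟩)
        rw [this, measure_empty, smul_eq_mul, mul_zero]
      have hae2 : ∀ᵐ z ∂π, z.2 ∈ bigCube d L := by
        rw [ae_iff]
        have hset : {z : EuclideanSpace ℝ (Fin d) × EuclideanSpace ℝ (Fin d) |
            ¬ z.2 ∈ bigCube d L} = Prod.snd ⁻¹' (bigCube d L)ᶜ := rfl
        rw [hset, ← Measure.map_apply measurable_snd measurableSet_bigCube.compl, hπ2, hνdef,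
          Measure.smul_apply, Measure.restrict_apply measurableSet_bigCube.compl,
          Set.compl_inter_self, measure_empty, smul_eq_mul, mul_zero]
      -- pointwise inequality
      have hptwise : ∀ᵐ z ∂π, ξ z.1 - ξ z.2 ≤ dist z.1 z.2 := by
        filter_upwards [hae1, hae2] with z hz1 hz2
        obtain ⟨_, ⟨s, rfl⟩, hzs⟩ := hz1
        have hz1b : z.1 ∈ bigCube d L := subCube_subset_bigCube hL0.le s hzs
        calc ξ z.1 - ξ z.2 ≤ |ξ z.1 - ξ z.2| := le_abs_self _
          _ ≤ dist z.1 z.2 := key_bound hL0 hε hz1b hz2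
      -- integrability of dist
      have hIdist : Integrable (fun z : EuclideanSpace ℝ (Fin d) × EuclideanSpace ℝ (Fin d) =>
          dist z.1 z.2) π := by
        apply Integrable.mono' (integrable_const B)
        · exact (continuous_fst.dist continuous_snd).aestronglyMeasurable
        · filter_upwards [hae1, hae2] with z hz1 hz2
          obtain ⟨_, ⟨s, rfl⟩, hzs⟩ := hz1
          rw [Real.norm_eq_abs, abs_of_nonneg dist_nonneg]
          exact hdistB _ (subCube_subset_bigCube hL0.le s hzs) _ hz2
      -- the integral computation
      have hμint : ∫ x, ξ x ∂μ = ∑ s : Fin d → Fin 2, κi s * (ε s * I s) := by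
        rw [hμdef, integral_finset_sum_measure fun s _ =>
          (integrable_lattice_restrict (measurableSet_subCube s) (hQfin s) ξ).smul_measure
            ENNReal.ofReal_ne_top]
        apply Finset.sum_congr rfl
        intro s _
        rw [integral_smul_measure, ENNReal.toReal_ofReal (hκi s).le,
          integral_lattice_restrict (measurableSet_subCube s) (hQfin s) ξ, hsum_cube s,
          smul_eq_mul]
      have hνint : ∫ x, ξ x ∂ν = κ * ∑ s : Fin d → Fin 2, ε s * I s := by
        rw [hνdef, integral_smul_measure, ENNReal.toReal_ofReal hκ.le,
          integral_lattice_restrict measurableSet_bigCube hBfin ξ, hsum_big, smul_eq_mul]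
      -- T = ∫ξ dμ - ∫ξ dν
      have hT : (∑ s : Fin d → Fin 2, I s * |κi s - κ|) = ∫ x, ξ x ∂μ - ∫ x, ξ x ∂ν := by
        rw [hμint, hνint, Finset.mul_sum, ← Finset.sum_sub_distrib]
        apply Finset.sum_congr rfl
        intro s _
        have : κi s * (ε s * I s) - κ * (ε s * I s) = (ε s * (κi s - κ)) * I s := by ring
        rw [this]
        have habsεs : ε s * (κi s - κ) = |κi s - κ| := by
          by_cases h : κ ≤ κi s
          · have hεs : ε s = 1 := by rw [hεdef]; simp [h]
            rw [hεs, one_mul, abs_of_nonneg (by linarith)]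
          · push_neg at h
            have hεs : ε s = -1 := by rw [hεdef]; simp [not_le.2 h]
            rw [hεs, abs_of_neg (by linarith)]; ring
        rw [habsεs, mul_comm]
      -- put together
      have hchain : (∑ s : Fin d → Fin 2, I s * |κi s - κ|) ≤
          ∫ z, dist z.1 z.2 ∂π := by
        rw [hT]
        have h1 : ∫ x, ξ x ∂μ - ∫ x, ξ x ∂ν = ∫ z, (ξ z.1 - ξ z.2) ∂π := by
          rw [integral_sub hIfst hIsnd]
          congr 1
          · rw [← hπ1, integral_map measurable_fst.aemeasurable hmeasξ.aestronglyMeasurable]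
          · rw [← hπ2, integral_map measurable_snd.aemeasurable hmeasξ.aestronglyMeasurable]
        rw [h1]
        exact integral_mono_ae (hIfst.sub hIsnd) hIdist hptwise
      calc ENNReal.ofReal (∑ s : Fin d → Fin 2,
            (∫ x in subCube d L s, Metric.infDist x Sg ∂(latticeMeasure d)) * |κi s - κ|)
          = ENNReal.ofReal (∑ s : Fin d → Fin 2, I s * |κi s - κ|) := by
            congr 1
            exact Finset.sum_congr rfl fun s _ => by rw [hint_eq s]
        _ ≤ ENNReal.ofReal (∫ z, dist z.1 z.2 ∂π) := ENNReal.ofReal_le_ofReal hchain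
        _ = ∫⁻ z, ENNReal.ofReal (dist z.1 z.2) ∂π :=
            ofReal_integral_eq_lintegral_ofReal hIdist (Filter.Eventually.of_forall
              fun z => dist_nonneg)
        _ = ∫⁻ z, ENNReal.ofReal (dist z.1 z.2 ^ (1 : ℝ)) ∂π := by
            apply lintegral_congr
            intro z
            rw [Real.rpow_one]
    · -- second inequality
      calc (∑ s : Fin d → Fin 2,
            (∫ x in subCube d L s, Metric.infDist x Sg ∂(latticeMeasure d)) * |κi s - κ|)
          = ∑ s : Fin d → Fin 2, I s * |κi s - κ| :=
            Finset.sum_congr rfl fun s _ => by rw [hint_eq s]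
        _ ≥ ∑ s : Fin d → Fin 2, ((1 / 4 : ℝ) ^ (d + 1) * L ^ (d + 1)) * |κi s - κ| := by
            apply Finset.sum_le_sum
            intro s _
            exact mul_le_mul_of_nonneg_right (count_lower hd hL s (hQfin s)) (abs_nonneg _)
        _ = (1 / 4 : ℝ) ^ (d + 1) * L ^ (d + 1) * ∑ s : Fin d → Fin 2, |κi s - κ| := by
            rw [← Finset.mul_sum]
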